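/- Let d ≥ 2 and n ≥ 1 be integers. For a positive integer k, set x(k) = ⌊log_d k⌋ and h(k) = d^{⌊(n+x(k))/2⌋} + k·( d^{n−⌊(n+x(k))/2⌋−1} − 1 ). Then for every integer k ≥ 2 with ⌊log_d k⌋ ≤ n−1, one has h(k−1) ≤ h(k); in other words, h is non-decreasing on the range of k with ⌊log_d k⌋ ≤ n−1. -/

import Mathlib

lemma stmt_7_key (d x b : ℕ) (hd : 2 ≤ d) :
    d ^ (x + b) + (d ^ x - 1) * (d ^ (b + 1) - 1)
      ≤ d ^ (x + b + 1) + d ^ x * (d ^ b - 1) := by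
  have h1 : 1 ≤ d ^ x := Nat.one_le_pow _ _ (by omega)
  have h2 : 1 ≤ d ^ b := Nat.one_le_pow _ _ (by omega)
  have h3 : 1 ≤ d ^ (b + 1) := Nat.one_le_pow _ _ (by omega)
  zify [h1, h2, h3]
  have e1 : (d : ℤ) ^ (x + b) = d ^ x * d ^ b := by rw [pow_add]
  have e2 : (d : ℤ) ^ (x + b + 1) = d ^ x * d ^ b * d := by rw [pow_succ, pow_add]
  have e3 : (d : ℤ) ^ (b + 1) = d ^ b * d := by rw [pow_succ]
  rw [e1, e2, e3]
  have h1' : (1 : ℤ) ≤ (d : ℤ) ^ x := by exact_mod_cast h1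
  have h2' : (1 : ℤ) ≤ (d : ℤ) ^ b := by exact_mod_cast h2
  have hd' : (2 : ℤ) ≤ (d : ℤ) := by exact_mod_cast hd
  nlinarith [mul_le_mul h1' h2' (by linarith) (by linarith : (0:ℤ) ≤ (d:ℤ)^x)]

/-- Lemma 2 of the paper: with `x(k) = ⌊log_d k⌋`, the function
`h(k) = d^{⌊(n+x(k))/2⌋} + k (d^{n-⌊(n+x(k))/2⌋-1} - 1)` satisfies
`h(k-1) ≤ h(k)` for every `k ≥ 2` with `⌊log_d k⌋ ≤ n-1`. -/
theorem stmt_7 (d n : ℕ) (hd : 2 ≤ d) (hn : 1 ≤ n) (k : ℕ) (hk : 2 ≤ k)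
    (hlog : Nat.log d k ≤ n - 1) :
    d ^ ((n + Nat.log d (k - 1)) / 2)
        + (k - 1) * (d ^ (n - (n + Nat.log d (k - 1)) / 2 - 1) - 1)
      ≤ d ^ ((n + Nat.log d k) / 2)
        + k * (d ^ (n - (n + Nat.log d k) / 2 - 1) - 1) := by
  set x := Nat.log d k with hxdef
  have hd1 : 1 ≤ d := by omega
  have h1 : Nat.log d (k - 1) ≤ x := Nat.log_mono_right (by omega)
  have h2 : x ≤ Nat.log d (k - 1) + 1 := by
    have : Nat.log d k ≤ Nat.log d ((k - 1) * d) := Nat.log_mono_right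
      (le_trans (by omega) (Nat.mul_le_mul_left (k - 1) hd))
    rwa [Nat.log_mul_base (by omega) (by omega)] at this
  rcases eq_or_lt_of_le h1 with heq | hlt
  · rw [heq]
    exact Nat.add_le_add_left (Nat.mul_le_mul_right _ (by omega)) _
  · -- log drops: k = d ^ x
    have hxeq : Nat.log d (k - 1) = x - 1 := by omega
    have hx1 : 1 ≤ x := by omega
    have hkpow : k = d ^ x := by
      have ha : d ^ x ≤ k := Nat.pow_log_le_self d (by omega)
      have hb : k - 1 < d ^ (Nat.log d (k - 1) + 1) :=
        Nat.lt_pow_succ_log_self (by omega) _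
      have : Nat.log d (k-1) + 1 = x := by omega
      rw [this] at hb
      omega
    rw [hxeq, hkpow]
    rcases Nat.even_or_odd (n + x) with he | ho
    · -- n + x even: exponents shift
      obtain ⟨m, hm⟩ := he
      have hmn : m ≤ n - 1 := by omega
      have hmx : x + 1 ≤ m := by omega
      obtain ⟨b, hb⟩ : ∃ b, m = x + b + 1 := ⟨m - x - 1, by omega⟩
      have e1 : (n + (x - 1)) / 2 = x + b := by omega
      have e2 : n - (x + b) - 1 = b + 1 := by omega
      have e3 : (n + x) / 2 = x + b + 1 := by omega
      have e4 : n - (x + b + 1) - 1 = b := by omega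
      rw [e1, e2, e3, e4]
      exact stmt_7_key d x b hd
    · -- n + x odd: exponents equal
      obtain ⟨m, hm⟩ := ho
      have e1 : (n + (x - 1)) / 2 = (n + x) / 2 := by omega
      rw [e1]
      exact Nat.add_le_add_left (Nat.mul_le_mul_right _ (by omega)) _
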